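/- Fix positive integers k, M, n and reals ε, δ, α ≥ 0, β ∈ [0,1]. If there exists an (ε,δ)-DP algorithm (under event-level neighbors) for cumulative freq≥k in the bundle setting on datasets with time horizon T = M over a universe of size U ≥ n having (α, β/2)-utility, then there exists an (ε,δ)-DP algorithm for the 1d-range query problem with domain {1,...,M} on inputs of at most n points having (2α, β)-utility. -/

import Mathlib

open Finset

/-- `(ε, δ)`-differential privacy of a randomized algorithm `M`
with respect to the neighboring relation `neighbor`. -/
def IsDP {I O : Type} (neighbor : I → I → Prop) (M : I → PMF O) (ε δ : ℝ) : Prop :=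
  ∀ D D', neighbor D D' → ∀ s : Set O,
    (M D).toOuterMeasure s ≤
      ENNReal.ofReal (Real.exp ε) * (M D').toOuterMeasure s + ENNReal.ofReal δ

/-- `(α, β)`-utility: for every input and every query, with probability at least
`1 - β` the output estimate is within `α` of the true value. -/
def HasUtility {I Q : Type} (M : I → PMF (Q → ℝ)) (val : I → Q → ℝ) (α β : ℝ) : Prop :=
  ∀ D q, ENNReal.ofReal (1 - β) ≤ (M D).toOuterMeasure {o | |o q - val D q| ≤ α}

/-- A dataset with time horizon `T` over universe `[U]`:
`S t u` is the multiplicity of item `u` at (0-indexed) time step `t`. -/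
abbrev Dataset (T U : ℕ) : Type := Fin T → Fin U → ℕ

/-- `S^{[t₁, t₂]}_u` with 1-indexed times: total multiplicity of item `u`
during time steps `t₁, ..., t₂`. -/
def winCount {T U : ℕ} (S : Dataset T U) (t₁ t₂ : ℕ) (u : Fin U) : ℕ :=
  ∑ t : Fin T, if t₁ ≤ (t : ℕ) + 1 ∧ (t : ℕ) + 1 ≤ t₂ then S t u else 0

/-- `freq≥k(S^{[t₁,t₂]})`: the number of items occurring at least `k` times. -/
def freqGe {T U : ℕ} (k : ℕ) (S : Dataset T U) (t₁ t₂ : ℕ) : ℕ :=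
  (Finset.univ.filter fun u : Fin U => k ≤ winCount S t₁ t₂ u).card

/-- `freq=k(S^{[t₁,t₂]})`: the number of items occurring exactly `k` times. -/
def freqEq {T U : ℕ} (k : ℕ) (S : Dataset T U) (t₁ t₂ : ℕ) : ℕ :=
  (Finset.univ.filter fun u : Fin U => winCount S t₁ t₂ u = k).card

/-- Item-level neighbors: the datasets agree on all items except possibly one. -/
def ItemNeighbor {T U : ℕ} (S S' : Dataset T U) : Prop :=
  ∃ u : Fin U, ∀ u' : Fin U, u' ≠ u → ∀ t : Fin T, S t u' = S' t u'

/-- Event-level neighbors: the total (absolute) difference of multiplicities is at most 1. -/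
def EventNeighbor {T U : ℕ} (S S' : Dataset T U) : Prop :=
  (∑ t : Fin T, ∑ u : Fin U, ((S t u : ℤ) - (S' t u : ℤ)).natAbs) ≤ 1

/-- Singleton setting: at most one item arrives at each time step. -/
def IsSingleton {T U : ℕ} (S : Dataset T U) : Prop :=
  ∀ t : Fin T, (∑ u : Fin U, S t u) ≤ 1

/-- Cumulative `freq≥k` queries: the query indexed by `t : Fin T` is
`freq≥k(S^{[1, t+1]})`. -/
def cumVal (k : ℕ) {T U : ℕ} (S : Dataset T U) (t : Fin T) : ℝ :=
  (freqGe k S 1 ((t : ℕ) + 1) : ℝ)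

/-- Time-window `freq≥k` queries: the query indexed by a pair `t₁ ≤ t₂` (0-indexed)
is `freq≥k(S^{[t₁+1, t₂+1]})`. -/
def twVal (k : ℕ) {T U : ℕ} (S : Dataset T U)
    (p : {p : Fin T × Fin T // p.1 ≤ p.2}) : ℝ :=
  (freqGe k S ((p.1.1 : ℕ) + 1) ((p.1.2 : ℕ) + 1) : ℝ)

/-- Time-window `freq=k` queries. -/
def twValEq (k : ℕ) {T U : ℕ} (S : Dataset T U)
    (p : {p : Fin T × Fin T // p.1 ≤ p.2}) : ℝ :=
  (freqEq k S ((p.1.1 : ℕ) + 1) ((p.1.2 : ℕ) + 1) : ℝ)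

/-- Fixed-window `freq≥k` queries with window `W`: the query indexed by
`i : Fin (T - W + 1)` is `freq≥k(S^{[i+1, i+W]})`. -/
def fwVal (k W : ℕ) {T U : ℕ} (S : Dataset T U) (i : Fin (T - W + 1)) : ℝ :=
  (freqGe k S ((i : ℕ) + 1) ((i : ℕ) + W) : ℝ)

/-- Neighboring inputs for range-query-type problems: they differ by adding
or removing a single point. -/
def AddRemoveNeighbor {P : Type} (D D' : Multiset P) : Prop :=
  ∃ x : P, D' = x ::ₘ D ∨ D = x ::ₘ D'

/-- 1d-range queries over a linearly ordered finite domain `Fin M`: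
the query indexed by `y₁ ≤ y₂` counts the points in `[y₁, y₂]`. -/
def range1Val {M : ℕ} (D : Multiset (Fin M))
    (p : {p : Fin M × Fin M // p.1 ≤ p.2}) : ℝ :=
  ((D.filter fun x => p.1.1 ≤ x ∧ x ≤ p.1.2).card : ℝ)

/-- 2d-range queries over the domain `Fin M × Fin M`: the query indexed by a pair
`(y¹, y²)` counts the points `x` with `y¹ ⪯ x ⪯ y²` coordinatewise. -/
def range2Val {M : ℕ} (D : Multiset (Fin M × Fin M))
    (p : (Fin M × Fin M) × (Fin M × Fin M)) : ℝ :=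
  ((D.filter fun x =>
      p.1.1 ≤ x.1 ∧ p.1.2 ≤ x.2 ∧ x.1 ≤ p.2.1 ∧ x.2 ≤ p.2.2).card : ℝ)

/-- Neighboring inputs for the linear query problem: they differ
in a single coordinate. -/
def CoordNeighbor {m : ℕ} (x x' : Fin m → Bool) : Prop :=
  ∃ u : Fin m, ∀ u' : Fin m, u' ≠ u → x u' = x' u'

/-- The `A`-linear queries: the query indexed by `i : Fin d` is `(A x)_i`. -/
def linVal {d m : ℕ} (A : Fin d → Fin m → Bool) (x : Fin m → Bool) (i : Fin d) : ℝ :=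
  ((∑ u : Fin m, if A i u && x u then 1 else 0 : ℕ) : ℝ)

/-- The 1-way marginal queries: the query indexed by `i : Fin d` is the `i`-th
coordinate of the sum of the input vectors. -/
def margVal {d : ℕ} (D : Multiset (Fin d → Bool)) (i : Fin d) : ℝ :=
  (((D.map fun x => if x i then (1 : ℕ) else 0).sum : ℕ) : ℝ)

namespace RangeRed

def sortL {M : ℕ} (D : Multiset (Fin M)) : List (Fin M) := Multiset.sort D (· ≤ ·)

def encL (k M U : ℕ) (L : List (Fin M)) (σ : Equiv.Perm (Fin U)) : Dataset M U :=
  fun t u => (if (t : ℕ) = 0 then k - 1 else 0) +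
    (if L[((σ⁻¹ u : Fin U) : ℕ)]? = some t then 1 else 0)

def shiftPerm (U r m : ℕ) (hrm : r ≤ m) (hm : m < U) : Equiv.Perm (Fin U) where
  toFun j := if h : r ≤ (j : ℕ) ∧ (j : ℕ) < m then ⟨(j : ℕ) + 1, by omega⟩
    else if (j : ℕ) = m then ⟨r, by omega⟩ else j
  invFun j := if h : r < (j : ℕ) ∧ (j : ℕ) ≤ m then ⟨(j : ℕ) - 1, by omega⟩
    else if (j : ℕ) = r then ⟨m, hm⟩ else j
  left_inv := by
    intro j
    dsimp only
    by_cases h1 : r ≤ (j : ℕ) ∧ (j : ℕ) < m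
    · rw [dif_pos h1, dif_pos (show r < (j : ℕ) + 1 ∧ (j : ℕ) + 1 ≤ m by omega)]
      exact Fin.ext (show (j : ℕ) + 1 - 1 = (j : ℕ) by omega)
    · rw [dif_neg h1]
      by_cases h2 : (j : ℕ) = m
      · rw [if_pos h2, dif_neg (show ¬(r < r ∧ r ≤ m) by omega), if_pos rfl]
        exact Fin.ext h2.symm
      · rw [if_neg h2, dif_neg (show ¬(r < (j : ℕ) ∧ (j : ℕ) ≤ m) by omega),
          if_neg (show ¬((j : ℕ) = r) by omega)]
  right_inv := by
    intro j
    dsimp only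
    by_cases h1 : r < (j : ℕ) ∧ (j : ℕ) ≤ m
    · rw [dif_pos h1, dif_pos (show r ≤ (j : ℕ) - 1 ∧ (j : ℕ) - 1 < m by omega)]
      exact Fin.ext (show (j : ℕ) - 1 + 1 = (j : ℕ) by omega)
    · rw [dif_neg h1]
      by_cases h2 : (j : ℕ) = r
      · rw [if_pos h2, dif_neg (show ¬(r ≤ m ∧ m < m) by omega), if_pos rfl]
        exact Fin.ext h2.symm
      · rw [if_neg h2, dif_neg (show ¬(r ≤ (j : ℕ) ∧ (j : ℕ) < m) by omega),
          if_neg (show ¬((j : ℕ) = m) by omega)]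

lemma shiftPerm_apply (U r m : ℕ) (hrm : r ≤ m) (hm : m < U) (j : Fin U) :
    shiftPerm U r m hrm hm j = if h : r ≤ (j : ℕ) ∧ (j : ℕ) < m then ⟨(j : ℕ) + 1, by omega⟩
      else if (j : ℕ) = m then ⟨r, by omega⟩ else j := rfl


variable {M U : ℕ}

lemma winCount_encL (k : ℕ) (L : List (Fin M)) (σ : Equiv.Perm (Fin U)) (t : Fin M) (u : Fin U) :
    winCount (encL k M U L σ) 1 ((t : ℕ) + 1) u =
      (k - 1) + (if ∃ w : Fin M, L[((σ⁻¹ u : Fin U) : ℕ)]? = some w ∧ (w : ℕ) ≤ (t : ℕ)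
        then 1 else 0) := by
  classical
  have hpos : 0 < M := t.pos
  have h1 : ∀ t' : Fin M,
      (if 1 ≤ (t' : ℕ) + 1 ∧ (t' : ℕ) + 1 ≤ (t : ℕ) + 1 then encL k M U L σ t' u else 0)
      = (if t' = (⟨0, hpos⟩ : Fin M) then k - 1 else 0)
        + (if ((t' : ℕ) ≤ (t : ℕ) ∧ L[((σ⁻¹ u : Fin U) : ℕ)]? = some t') then 1 else 0) := by
    intro t'
    unfold encL
    by_cases hle : (t' : ℕ) ≤ (t : ℕ)
    · rw [if_pos (by omega)]
      congr 1
      · by_cases h0 : (t' : ℕ) = 0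
        · rw [if_pos h0, if_pos (Fin.ext h0)]
        · rw [if_neg h0, if_neg (fun hh => h0 (by rw [hh]))]
      · by_cases hs : L[((σ⁻¹ u : Fin U) : ℕ)]? = some t'
        · rw [if_pos hs, if_pos ⟨hle, hs⟩]
        · rw [if_neg hs, if_neg (fun hh => hs hh.2)]
    · rw [if_neg (by omega)]
      have hne : t' ≠ (⟨0, hpos⟩ : Fin M) := by
        intro hh; exact hle (by rw [hh]; exact Nat.zero_le _)
      rw [if_neg hne, if_neg (fun hh => hle hh.1)]
  unfold winCount
  rw [Finset.sum_congr rfl fun t' _ => h1 t', Finset.sum_add_distrib]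
  congr 1
  · rw [Finset.sum_ite_eq' Finset.univ (⟨0, hpos⟩ : Fin M) (fun _ => k - 1),
      if_pos (Finset.mem_univ _)]
  · rcases hE : L[((σ⁻¹ u : Fin U) : ℕ)]? with _ | w
    · simp [hE]
    · have h2 : ∀ t' : Fin M, (if ((t' : ℕ) ≤ (t : ℕ) ∧ (some w : Option (Fin M)) = some t') then 1 else 0)
          = (if t' = w then (if (w : ℕ) ≤ (t : ℕ) then 1 else 0) else 0) := by
        intro t'
        by_cases h : t' = w
        · subst h; simp
        · rw [if_neg h, if_neg (fun hh => h (Option.some_inj.mp hh.2).symm)]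
      rw [Finset.sum_congr rfl fun t' _ => h2 t',
        Finset.sum_ite_eq' Finset.univ w (fun _ => if (w : ℕ) ≤ (t : ℕ) then 1 else 0),
        if_pos (Finset.mem_univ _)]
      simp [hE]

lemma sum_range_countP {γ : Type} (L : List γ) (q : γ → Prop) [DecidablePred q] :
    (∑ j ∈ Finset.range L.length, if (∃ w, L[j]? = some w ∧ q w) then 1 else 0)
      = L.countP (fun w => decide (q w)) := by
  induction L with
  | nil => simp
  | cons a L ih =>
    rw [List.length_cons, Finset.sum_range_succ', List.countP_cons, ← ih]
    congr 1
    · simp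

lemma card_filter_getElem {γ : Type} (U : ℕ) (L : List γ) (hL : L.length ≤ U)
    (q : γ → Prop) [DecidablePred q] :
    (Finset.univ.filter fun j : Fin U => ∃ w, L[(j : ℕ)]? = some w ∧ q w).card
      = L.countP (fun w => decide (q w)) := by
  classical
  rw [Finset.card_filter]
  rw [Fin.sum_univ_eq_sum_range (fun j => if (∃ w, L[j]? = some w ∧ q w) then 1 else 0) U]
  rw [← Finset.sum_subset (Finset.range_subset_range.2 hL)
    (fun j _ hj => by simp [List.getElem?_eq_none (by simpa using hj : L.length ≤ j)])]
  exact sum_range_countP L q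

lemma freqGe_encL {k : ℕ} (hk : 0 < k) (L : List (Fin M)) (hL : L.length ≤ U)
    (σ : Equiv.Perm (Fin U)) (t : Fin M) :
    freqGe k (encL k M U L σ) 1 ((t : ℕ) + 1)
      = L.countP (fun w : Fin M => decide ((w : ℕ) ≤ (t : ℕ))) := by
  classical
  unfold freqGe
  have hpred : ∀ u : Fin U, (k ≤ winCount (encL k M U L σ) 1 ((t : ℕ) + 1) u) ↔
      (∃ w : Fin M, L[((σ⁻¹ u : Fin U) : ℕ)]? = some w ∧ (w : ℕ) ≤ (t : ℕ)) := by
    intro u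
    rw [winCount_encL]
    by_cases h : ∃ w : Fin M, L[((σ⁻¹ u : Fin U) : ℕ)]? = some w ∧ (w : ℕ) ≤ (t : ℕ)
    · rw [if_pos h]
      exact iff_of_true (by omega) h
    · rw [if_neg h]
      exact iff_of_false (by omega) h
  have hre : (Finset.univ.filter fun u : Fin U =>
        k ≤ winCount (encL k M U L σ) 1 ((t : ℕ) + 1) u).card
      = (Finset.univ.filter fun j : Fin U =>
          ∃ w : Fin M, L[(j : ℕ)]? = some w ∧ (w : ℕ) ≤ (t : ℕ)).card := by
    apply Finset.card_bij (fun u _ => σ⁻¹ u)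
    · intro a ha
      simp only [Finset.mem_filter, Finset.mem_univ, true_and] at ha ⊢
      exact (hpred a).mp ha
    · intro a _ b _ h
      exact σ⁻¹.injective h
    · intro b hb
      refine ⟨σ b, ?_, by simp⟩
      simp only [Finset.mem_filter, Finset.mem_univ, true_and] at hb ⊢
      exact (hpred (σ b)).mpr (by simpa using hb)
  rw [hre]
  convert card_filter_getElem U L hL (fun w : Fin M => (w : ℕ) ≤ (t : ℕ))

lemma cumVal_encL {k : ℕ} (hk : 0 < k) (D : Multiset (Fin M)) (hD : Multiset.card D ≤ U)
    (σ : Equiv.Perm (Fin U)) (t : Fin M) :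
    cumVal k (encL k M U (sortL D) σ) t
      = ((sortL D).countP (fun w : Fin M => decide ((w : ℕ) ≤ (t : ℕ))) : ℝ) := by
  unfold cumVal
  rw [freqGe_encL hk (sortL D) (by rw [sortL, Multiset.length_sort]; exact hD) σ t]


lemma countP_zero_case (L : List (Fin M)) (y1 y2 : Fin M) (h0 : (y1 : ℕ) = 0) :
    L.countP (fun w : Fin M => decide (y1 ≤ w ∧ w ≤ y2))
      = L.countP (fun w : Fin M => decide ((w : ℕ) ≤ (y2 : ℕ))) := by
  induction L with
  | nil => rfl
  | cons a L ih =>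
    rw [List.countP_cons, List.countP_cons, ih]
    congr 1
    rw [show (decide (y1 ≤ a ∧ a ≤ y2)) = (decide ((a : ℕ) ≤ (y2 : ℕ))) from
      decide_eq_decide.mpr (by rw [Fin.le_def, Fin.le_def]; omega)]

lemma countP_split (L : List (Fin M)) (y1 y2 : Fin M) (h1 : 1 ≤ (y1 : ℕ)) (h12 : (y1 : ℕ) ≤ (y2 : ℕ)) :
    L.countP (fun w : Fin M => decide ((w : ℕ) ≤ (y2 : ℕ)))
      = L.countP (fun w : Fin M => decide ((w : ℕ) ≤ (y1 : ℕ) - 1))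
        + L.countP (fun w : Fin M => decide (y1 ≤ w ∧ w ≤ y2)) := by
  induction L with
  | nil => rfl
  | cons a L ih =>
    rw [List.countP_cons, List.countP_cons, List.countP_cons, ih]
    have hsplit : (if decide ((a : ℕ) ≤ (y2 : ℕ)) then (1:ℕ) else 0)
        = (if decide ((a : ℕ) ≤ (y1 : ℕ) - 1) then 1 else 0)
          + (if decide (y1 ≤ a ∧ a ≤ y2) then 1 else 0) := by
      simp only [decide_eq_true_eq, Fin.le_def]
      split_ifs <;> omega
    omega

lemma sortL_coe (D : Multiset (Fin M)) : ((sortL D : List (Fin M)) : Multiset (Fin M)) = D :=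
  Multiset.sort_eq _ _

lemma multiset_filter_card (D : Multiset (Fin M)) (q : Fin M → Prop) [DecidablePred q] :
    (Multiset.filter q D).card = (sortL D).countP (fun w : Fin M => decide (q w)) := by
  rw [← Multiset.countP_eq_card_filter]
  conv_lhs => rw [← sortL_coe D]
  exact Multiset.coe_countP q (sortL D)

lemma sortL_sorted (D : Multiset (Fin M)) : (sortL D).Pairwise (· ≤ ·) :=
  Multiset.pairwise_sort _ _

lemma sortL_length (D : Multiset (Fin M)) : (sortL D).length = Multiset.card D :=
  Multiset.length_sort _

lemma coupling (k : ℕ) (D : Multiset (Fin M)) (x : Fin M) (hc : Multiset.card D < U) :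
    ∃ π : Equiv.Perm (Fin U), ∀ σ : Equiv.Perm (Fin U),
      EventNeighbor (encL k M U (sortL D) σ) (encL k M U (sortL (x ::ₘ D)) (σ * π)) ∧
      EventNeighbor (encL k M U (sortL (x ::ₘ D)) (σ * π)) (encL k M U (sortL D) σ) := by
  classical
  have hins : sortL (x ::ₘ D) = ((sortL D).takeWhile fun b => ¬ x ≤ b)
      ++ x :: ((sortL D).dropWhile fun b => ¬ x ≤ b) := by
    have hperm : List.Perm (sortL (x ::ₘ D)) (List.orderedInsert (· ≤ ·) x (sortL D)) := by
      refine (Multiset.coe_eq_coe.mp ?_).trans (List.perm_orderedInsert _ x (sortL D)).symm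
      rw [sortL_coe, ← Multiset.cons_coe, sortL_coe]
    refine (hperm.eq_of_pairwise' (sortL_sorted _)
      ((sortL_sorted D).orderedInsert x _)).trans ?_
    exact List.orderedInsert_eq_take_drop _ x _
  set L : List (Fin M) := sortL D with hLdef
  set A : List (Fin M) := L.takeWhile (fun b => ¬ x ≤ b) with hAdef
  set B : List (Fin M) := L.dropWhile (fun b => ¬ x ≤ b) with hBdef
  have hAB : A ++ B = L := by
    rw [hAdef, hBdef]; exact List.takeWhile_append_dropWhile
  have hlen : A.length + B.length = L.length := by rw [← List.length_append, hAB]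
  have hrm : A.length ≤ L.length := by omega
  have hmU : L.length < U := by rw [hLdef, sortL_length]; exact hc
  have hkey : ∀ j : Fin U, (A ++ x :: B)[((shiftPerm U A.length L.length hrm hmU j : Fin U) : ℕ)]?
      = if (j : ℕ) = L.length then some x else L[(j : ℕ)]? := by
    intro j
    rw [shiftPerm_apply]
    by_cases h1 : A.length ≤ (j : ℕ) ∧ (j : ℕ) < L.length
    · rw [dif_pos h1, if_neg (by omega)]
      rw [show ((⟨(j:ℕ)+1, by omega⟩ : Fin U) : ℕ) = (j:ℕ)+1 from rfl]
      rw [List.getElem?_append_right (show A.length ≤ (j:ℕ)+1 by omega)]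
      rw [show (j:ℕ)+1 - A.length = ((j:ℕ) - A.length) + 1 from by omega, List.getElem?_cons_succ]
      conv_rhs => rw [← hAB]
      rw [List.getElem?_append_right h1.1]
    · rw [dif_neg h1]
      by_cases h2 : (j : ℕ) = L.length
      · rw [if_pos h2, if_pos h2]
        rw [show ((⟨A.length, by omega⟩ : Fin U) : ℕ) = A.length from rfl]
        rw [List.getElem?_append_right (le_refl A.length), Nat.sub_self, List.getElem?_cons_zero]
      · rw [if_neg h2, if_neg h2]
        rcases (show (j:ℕ) < A.length ∨ L.length < (j:ℕ) by omega) with h3 | h3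
        · rw [List.getElem?_append_left h3]
          conv_rhs => rw [← hAB]
          rw [List.getElem?_append_left h3]
        · rw [List.getElem?_eq_none (show (A ++ x :: B).length ≤ (j:ℕ) by
              rw [List.length_append, List.length_cons]; omega),
            List.getElem?_eq_none (show L.length ≤ (j:ℕ) by omega)]
  refine ⟨(shiftPerm U A.length L.length hrm hmU)⁻¹, fun σ => ?_⟩
  have happ : ∀ u : Fin U, ((σ * (shiftPerm U A.length L.length hrm hmU)⁻¹)⁻¹ u)
      = shiftPerm U A.length L.length hrm hmU (σ⁻¹ u) := by
    intro u; rw [mul_inv_rev, inv_inv, Equiv.Perm.mul_apply]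
  have henc : ∀ (t : Fin M) (u : Fin U),
      encL k M U (sortL (x ::ₘ D)) (σ * (shiftPerm U A.length L.length hrm hmU)⁻¹) t u
        = (if (t : ℕ) = 0 then k - 1 else 0) +
          (if ((σ⁻¹ u : Fin U) : ℕ) = L.length then (if x = t then 1 else 0)
            else (if L[((σ⁻¹ u : Fin U) : ℕ)]? = some t then 1 else 0)) := by
    intro t u
    show (if (t : ℕ) = 0 then k - 1 else 0) + _ = _
    congr 1
    rw [happ, hins, hkey (σ⁻¹ u)]
    by_cases hj : ((σ⁻¹ u : Fin U) : ℕ) = L.length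
    · rw [if_pos hj, if_pos hj]
      simp
    · rw [if_neg hj, if_neg hj]
  have hterm : ∀ (t : Fin M) (u : Fin U),
      ((encL k M U L σ t u : ℤ)
        - (encL k M U (sortL (x ::ₘ D)) (σ * (shiftPerm U A.length L.length hrm hmU)⁻¹) t u : ℤ)).natAbs
      = if u = σ ⟨L.length, hmU⟩ ∧ t = x then 1 else 0 := by
    intro t u
    rw [henc]
    show (((if (t : ℕ) = 0 then k - 1 else 0) + (if L[((σ⁻¹ u : Fin U) : ℕ)]? = some t then 1 else 0) : ℕ) - _ : ℤ).natAbs = _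
    by_cases hj : ((σ⁻¹ u : Fin U) : ℕ) = L.length
    · have hu : u = σ ⟨L.length, hmU⟩ := by
        have h' : σ⁻¹ u = (⟨L.length, hmU⟩ : Fin U) := Fin.ext hj
        rw [← h']; exact (σ.apply_symm_apply u).symm
      have hnone : L[((σ⁻¹ u : Fin U) : ℕ)]? = (none : Option (Fin M)) :=
        List.getElem?_eq_none (le_of_eq hj.symm)
      rw [if_pos hj, hnone]
      by_cases ht : t = x
      · have hc1 : (u = σ ⟨L.length, hmU⟩ ∧ t = x) := ⟨hu, ht⟩
        rw [if_pos hc1, if_neg (show ¬((none : Option (Fin M)) = some t) by simp),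
          if_pos ht.symm]
        push_cast
        omega
      · rw [if_neg (show ¬(u = σ ⟨L.length, hmU⟩ ∧ t = x) from fun hh => ht hh.2),
          if_neg (show ¬((none : Option (Fin M)) = some t) by simp),
          if_neg (show ¬(x = t) from fun hh => ht hh.symm)]
        simp
    · have hne : ¬(u = σ ⟨L.length, hmU⟩ ∧ t = x) := by
        rintro ⟨hu, -⟩
        apply hj
        rw [hu]; exact congrArg Fin.val (σ.symm_apply_apply _)
      rw [if_neg hj, if_neg hne]
      simp
  have hsum : ∀ S1 S2 : Dataset M U,
      (∀ (t : Fin M) (u : Fin U), ((S1 t u : ℤ) - (S2 t u : ℤ)).natAbs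
        = if u = σ ⟨L.length, hmU⟩ ∧ t = x then 1 else 0) → EventNeighbor S1 S2 := by
    intro S1 S2 h
    unfold EventNeighbor
    rw [Finset.sum_congr rfl fun t _ => Finset.sum_congr rfl fun u _ => h t u]
    have hinner : ∀ t : Fin M, (∑ u : Fin U, if u = σ ⟨L.length, hmU⟩ ∧ t = x then (1:ℕ) else 0)
        = if t = x then 1 else 0 := by
      intro t
      by_cases ht : t = x
      · simp [ht]
      · simp [ht]
    rw [Finset.sum_congr rfl fun t _ => hinner t]
    simp
  constructor
  · exact hsum _ _ hterm
  · refine hsum _ _ fun t u => ?_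
    rw [← Int.natAbs_neg, neg_sub]
    exact hterm t u

lemma pmf_add_le_inter {γ : Type} (p : PMF γ) (A B : Set γ) :
    p.toOuterMeasure A + p.toOuterMeasure B ≤ p.toOuterMeasure (A ∩ B) + 1 := by
  classical
  rw [PMF.toOuterMeasure_apply, PMF.toOuterMeasure_apply, PMF.toOuterMeasure_apply,
    ← ENNReal.tsum_add]
  have h : ∀ x, A.indicator p x + B.indicator p x ≤ (A ∩ B).indicator p x + p x := by
    intro x
    by_cases ha : x ∈ A <;> by_cases hb : x ∈ B <;>
      simp [Set.indicator_apply, ha, hb, Set.mem_inter_iff]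
  calc ∑' x, (A.indicator p x + B.indicator p x)
      ≤ ∑' x, ((A ∩ B).indicator p x + p x) := ENNReal.tsum_le_tsum h
    _ = (∑' x, (A ∩ B).indicator p x) + ∑' x, p x := ENNReal.tsum_add
    _ = (∑' x, (A ∩ B).indicator p x) + 1 := by rw [PMF.tsum_coe]

end RangeRed

/-- an event-level DP algorithm for cumulative `freq≥k` in the
bundle setting (horizon `M`, universe of size `U ≥ n`) yields a DP algorithm
for 1d-range query with domain `{1,...,M}` on inputs of at most `n` points. -/
theorem range1d_from_cumulative_bundle (k M n U : ℕ)
    (hk : 0 < k) (hM : 0 < M) (hn : 0 < n) (hU : n ≤ U)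
    (ε δ α β : ℝ) (hε : 0 ≤ ε) (hδ : 0 ≤ δ) (hα : 0 ≤ α) (hβ0 : 0 ≤ β) (hβ1 : β ≤ 1)
    (hcum : ∃ M₁ : Dataset M U → PMF (Fin M → ℝ),
      IsDP EventNeighbor M₁ ε δ ∧ HasUtility M₁ (cumVal k) α (β / 2)) :
    ∃ M₂ : {D : Multiset (Fin M) // Multiset.card D ≤ n} →
        PMF ({p : Fin M × Fin M // p.1 ≤ p.2} → ℝ),
      IsDP (fun D D' => AddRemoveNeighbor D.1 D'.1) M₂ ε δ ∧
      HasUtility M₂ (fun D => range1Val D.1) (2 * α) β := by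
  classical
  obtain ⟨M₁, hDP, hUt⟩ := hcum
  haveI : Nonempty (Equiv.Perm (Fin U)) := ⟨1⟩
  set unif : PMF (Equiv.Perm (Fin U)) := PMF.uniformOfFintype _ with hunif
  set post : (Fin M → ℝ) → ({p : Fin M × Fin M // p.1 ≤ p.2} → ℝ) := fun o p =>
    if (p.1.1 : ℕ) = 0 then o p.1.2
    else o p.1.2 - o ⟨(p.1.1 : ℕ) - 1, lt_of_le_of_lt (Nat.sub_le _ _) p.1.1.isLt⟩ with hpost
  have hmeas : ∀ (D : Multiset (Fin M)) (s : Set ({p : Fin M × Fin M // p.1 ≤ p.2} → ℝ)),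
      ((unif.bind fun σ => (M₁ (RangeRed.encL k M U (RangeRed.sortL D) σ)).map post).toOuterMeasure s)
        = ∑' σ : Equiv.Perm (Fin U),
            unif σ * (M₁ (RangeRed.encL k M U (RangeRed.sortL D) σ)).toOuterMeasure (post ⁻¹' s) := by
    intro D s
    rw [PMF.toOuterMeasure_bind_apply]
    exact tsum_congr fun σ => by rw [PMF.toOuterMeasure_map_apply]
  have huconst : ∀ σ : Equiv.Perm (Fin U),
      unif σ = ((Fintype.card (Equiv.Perm (Fin U)) : ENNReal))⁻¹ :=
    fun σ => PMF.uniformOfFintype_apply σ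
  have hre : ∀ (π : Equiv.Perm (Fin U)) (B : Equiv.Perm (Fin U) → ENNReal),
      ∑' σ : Equiv.Perm (Fin U), unif σ * B (σ * π) = ∑' σ : Equiv.Perm (Fin U), unif σ * B σ := by
    intro π B
    calc ∑' σ : Equiv.Perm (Fin U), unif σ * B (σ * π)
        = ∑' σ : Equiv.Perm (Fin U), unif (σ * π) * B (σ * π) := by
          exact tsum_congr fun σ => by rw [huconst, huconst]
      _ = ∑' σ : Equiv.Perm (Fin U), unif σ * B σ :=
          Equiv.tsum_eq (Equiv.mulRight π) (fun σ => unif σ * B σ)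
  have hstep : ∀ (Afn Bfn : Equiv.Perm (Fin U) → ENNReal),
      (∀ σ, Afn σ ≤ ENNReal.ofReal (Real.exp ε) * Bfn σ + ENNReal.ofReal δ) →
      ∑' σ : Equiv.Perm (Fin U), unif σ * Afn σ
        ≤ ENNReal.ofReal (Real.exp ε) * (∑' σ : Equiv.Perm (Fin U), unif σ * Bfn σ)
          + ENNReal.ofReal δ := by
    intro Afn Bfn h
    calc ∑' σ : Equiv.Perm (Fin U), unif σ * Afn σ
        ≤ ∑' σ : Equiv.Perm (Fin U),
            unif σ * (ENNReal.ofReal (Real.exp ε) * Bfn σ + ENNReal.ofReal δ) :=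
          ENNReal.tsum_le_tsum fun σ => mul_le_mul_right (h σ) _
      _ = ∑' σ : Equiv.Perm (Fin U),
            (ENNReal.ofReal (Real.exp ε) * (unif σ * Bfn σ) + unif σ * ENNReal.ofReal δ) :=
          tsum_congr fun σ => by ring
      _ = ENNReal.ofReal (Real.exp ε) * (∑' σ : Equiv.Perm (Fin U), unif σ * Bfn σ)
            + (∑' σ : Equiv.Perm (Fin U), unif σ) * ENNReal.ofReal δ := by
          rw [ENNReal.tsum_add, ENNReal.tsum_mul_left, ENNReal.tsum_mul_right]
      _ = _ := by rw [PMF.tsum_coe, one_mul]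
  refine ⟨fun D => unif.bind fun σ =>
    (M₁ (RangeRed.encL k M U (RangeRed.sortL D.1) σ)).map post, ?_, ?_⟩
  · -- privacy
    intro D D' hnb s
    rw [hmeas, hmeas]
    obtain ⟨x, hx | hx⟩ := hnb
    · obtain ⟨π, hπ⟩ := RangeRed.coupling (U := U) k D.1 x (by
        have h2 := D'.2
        rw [hx, Multiset.card_cons] at h2
        omega)
      rw [hx]
      calc ∑' σ : Equiv.Perm (Fin U),
            unif σ * (M₁ (RangeRed.encL k M U (RangeRed.sortL D.1) σ)).toOuterMeasure (post ⁻¹' s)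
          ≤ ENNReal.ofReal (Real.exp ε) * (∑' σ : Equiv.Perm (Fin U), unif σ *
              (M₁ (RangeRed.encL k M U (RangeRed.sortL (x ::ₘ D.1)) (σ * π))).toOuterMeasure
                (post ⁻¹' s)) + ENNReal.ofReal δ :=
            hstep _ _ (fun σ => hDP _ _ ((hπ σ).1) _)
        _ = _ := by
          congr 2
          exact hre π (fun σ' =>
            (M₁ (RangeRed.encL k M U (RangeRed.sortL (x ::ₘ D.1)) σ')).toOuterMeasure
              (post ⁻¹' s))
    · obtain ⟨π, hπ⟩ := RangeRed.coupling (U := U) k D'.1 x (by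
        have h2 := D.2
        rw [hx, Multiset.card_cons] at h2
        omega)
      rw [hx]
      calc ∑' σ : Equiv.Perm (Fin U),
            unif σ * (M₁ (RangeRed.encL k M U (RangeRed.sortL (x ::ₘ D'.1)) σ)).toOuterMeasure
              (post ⁻¹' s)
          = ∑' σ : Equiv.Perm (Fin U),
              unif σ * (M₁ (RangeRed.encL k M U (RangeRed.sortL (x ::ₘ D'.1)) (σ * π))).toOuterMeasure
                (post ⁻¹' s) := (hre π (fun σ' =>
              (M₁ (RangeRed.encL k M U (RangeRed.sortL (x ::ₘ D'.1)) σ')).toOuterMeasure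
                (post ⁻¹' s))).symm
        _ ≤ ENNReal.ofReal (Real.exp ε) * (∑' σ : Equiv.Perm (Fin U), unif σ *
              (M₁ (RangeRed.encL k M U (RangeRed.sortL D'.1) σ)).toOuterMeasure (post ⁻¹' s))
            + ENNReal.ofReal δ :=
            hstep _ _ (fun σ => hDP _ _ ((hπ σ).2) _)
  · -- utility
    intro D p
    rw [hmeas]
    have hDU : Multiset.card D.1 ≤ U := le_trans D.2 hU
    have hkey : ∀ σ : Equiv.Perm (Fin U),
        ENNReal.ofReal (1 - β) ≤ (M₁ (RangeRed.encL k M U (RangeRed.sortL D.1) σ)).toOuterMeasure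
          (post ⁻¹' {o | |o p - range1Val D.1 p| ≤ 2 * α}) := by
      intro σ
      have hval : range1Val D.1 p
          = (((RangeRed.sortL D.1).countP
              (fun w : Fin M => decide (p.1.1 ≤ w ∧ w ≤ p.1.2)) : ℕ) : ℝ) := by
        unfold range1Val
        rw [RangeRed.multiset_filter_card]
      by_cases h0 : (p.1.1 : ℕ) = 0
      · refine le_trans (ENNReal.ofReal_le_ofReal (by linarith)) (le_trans (hUt (RangeRed.encL k M U (RangeRed.sortL D.1) σ) p.1.2) ?_)
        apply ((M₁ _).toOuterMeasure).mono
        intro o ho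
        simp only [Set.mem_setOf_eq] at ho
        simp only [Set.mem_preimage, Set.mem_setOf_eq]
        have hp : post o p = o p.1.2 := if_pos h0
        rw [hp, hval, RangeRed.countP_zero_case _ _ _ h0]
        rw [RangeRed.cumVal_encL hk D.1 hDU σ p.1.2] at ho
        linarith
      · have h12 : (p.1.1 : ℕ) ≤ (p.1.2 : ℕ) := p.2
        set y1' : Fin M := ⟨(p.1.1 : ℕ) - 1, lt_of_le_of_lt (Nat.sub_le _ _) p.1.1.isLt⟩
          with hy1'
        have hA := hUt (RangeRed.encL k M U (RangeRed.sortL D.1) σ) p.1.2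
        have hB := hUt (RangeRed.encL k M U (RangeRed.sortL D.1) σ) y1'
        have hsub : {o : Fin M → ℝ |
              |o p.1.2 - cumVal k (RangeRed.encL k M U (RangeRed.sortL D.1) σ) p.1.2| ≤ α}
            ∩ {o : Fin M → ℝ |
              |o y1' - cumVal k (RangeRed.encL k M U (RangeRed.sortL D.1) σ) y1'| ≤ α}
            ⊆ post ⁻¹' {o | |o p - range1Val D.1 p| ≤ 2 * α} := by
          rintro o ⟨h2, h1⟩
          simp only [Set.mem_setOf_eq] at h1 h2
          simp only [Set.mem_preimage, Set.mem_setOf_eq]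
          have hp : post o p = o p.1.2 - o y1' := if_neg h0
          rw [hp, hval]
          rw [RangeRed.cumVal_encL hk D.1 hDU σ p.1.2] at h2
          rw [RangeRed.cumVal_encL hk D.1 hDU σ y1'] at h1
          have hy : ((y1' : Fin M) : ℕ) = (p.1.1 : ℕ) - 1 := rfl
          rw [hy] at h1
          have hsplit := RangeRed.countP_split (RangeRed.sortL D.1) p.1.1 p.1.2 (by omega) h12
          have hv2 : (((RangeRed.sortL D.1).countP
                (fun w : Fin M => decide (p.1.1 ≤ w ∧ w ≤ p.1.2)) : ℕ) : ℝ)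
              = (((RangeRed.sortL D.1).countP
                  (fun w : Fin M => decide ((w : ℕ) ≤ (p.1.2 : ℕ))) : ℕ) : ℝ)
                - (((RangeRed.sortL D.1).countP
                  (fun w : Fin M => decide ((w : ℕ) ≤ (p.1.1 : ℕ) - 1)) : ℕ) : ℝ) := by
            rw [hsplit]; push_cast; ring
          rw [hv2]
          rw [show o p.1.2 - o y1'
              - ((((RangeRed.sortL D.1).countP
                  (fun w : Fin M => decide ((w : ℕ) ≤ (p.1.2 : ℕ))) : ℕ) : ℝ)
                - (((RangeRed.sortL D.1).countP
                  (fun w : Fin M => decide ((w : ℕ) ≤ (p.1.1 : ℕ) - 1)) : ℕ) : ℝ))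
              = (o p.1.2 - (((RangeRed.sortL D.1).countP
                  (fun w : Fin M => decide ((w : ℕ) ≤ (p.1.2 : ℕ))) : ℕ) : ℝ))
                - (o y1' - (((RangeRed.sortL D.1).countP
                  (fun w : Fin M => decide ((w : ℕ) ≤ (p.1.1 : ℕ) - 1)) : ℕ) : ℝ)) from by ring]
          refine le_trans (abs_sub _ _) ?_
          linarith
        have hint := RangeRed.pmf_add_le_inter (M₁ (RangeRed.encL k M U (RangeRed.sortL D.1) σ))
          {o : Fin M → ℝ |
            |o p.1.2 - cumVal k (RangeRed.encL k M U (RangeRed.sortL D.1) σ) p.1.2| ≤ α}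
          {o : Fin M → ℝ |
            |o y1' - cumVal k (RangeRed.encL k M U (RangeRed.sortL D.1) σ) y1'| ≤ α}
        have hchain : ENNReal.ofReal (1 - β) + 1
            ≤ (M₁ (RangeRed.encL k M U (RangeRed.sortL D.1) σ)).toOuterMeasure
              ({o : Fin M → ℝ |
                  |o p.1.2 - cumVal k (RangeRed.encL k M U (RangeRed.sortL D.1) σ) p.1.2| ≤ α}
                ∩ {o : Fin M → ℝ |
                  |o y1' - cumVal k (RangeRed.encL k M U (RangeRed.sortL D.1) σ) y1'| ≤ α}) + 1 := by
          calc ENNReal.ofReal (1 - β) + 1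
              = ENNReal.ofReal ((1 - β / 2) + (1 - β / 2)) := by
                rw [← ENNReal.ofReal_one, ← ENNReal.ofReal_add (by linarith) (by norm_num)]
                congr 1
                ring
            _ = ENNReal.ofReal (1 - β / 2) + ENNReal.ofReal (1 - β / 2) :=
                ENNReal.ofReal_add (by linarith) (by linarith)
            _ ≤ _ := le_trans (add_le_add hA hB) hint
        have hfin := (ENNReal.add_le_add_iff_right (by simp)).mp hchain
        exact le_trans hfin (((M₁ _).toOuterMeasure).mono hsub)
    calc ENNReal.ofReal (1 - β)
        = ∑' σ : Equiv.Perm (Fin U), unif σ * ENNReal.ofReal (1 - β) := by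
          rw [ENNReal.tsum_mul_right, PMF.tsum_coe, one_mul]
      _ ≤ ∑' σ : Equiv.Perm (Fin U),
            unif σ * (M₁ (RangeRed.encL k M U (RangeRed.sortL D.1) σ)).toOuterMeasure
              (post ⁻¹' {o | |o p - range1Val D.1 p| ≤ 2 * α}) :=
          ENNReal.tsum_le_tsum fun σ => mul_le_mul_right (hkey σ) _
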